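/- Let Q ⊆ 𝔞⁺ be a closed convex cone with vertex at the origin that contains the barycenter v in its interior, and let C > 0. Define Q_T(C) = {t ∈ Q : ‖t‖ < T and α(t) ≥ C for all α ∈ Φ⁺}. Then ∫_{Q_T(C)} ξ(t) dt ∼ ∫_{(𝔞⁺)_T} ξ(t) dt as T → ∞ (i.e., the ratio of the two integrals tends to 1). (Paper's Lemma 5.3 in coordinate form.) -/

import Mathlib

open MeasureTheory Real Filter Set
set_option maxHeartbeats 1000000

private lemma sinh_le_exp' (x : ℝ) : Real.sinh x ≤ Real.exp x := by
  nlinarith [Real.sinh_eq x, Real.exp_pos (-x), Real.exp_pos x]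

private lemma le_sinh_of_le' (c x : ℝ) (hx : c ≤ x) :
    (1 - Real.exp (-(2*c)))/2 * Real.exp x ≤ Real.sinh x := by
  have h1 : Real.exp (-x) ≤ Real.exp (-(2*c)) * Real.exp x := by
    rw [← Real.exp_add]; exact Real.exp_le_exp.mpr (by linarith)
  nlinarith [Real.sinh_eq x]

/-- **Paper's Lemma 5.3 (coordinate form).**
Setup as in Lemma 5.1: `Φ⁺` is a finite nonempty family of nonzero linear functionals `α i`
on `ℝ^r` with multiplicities `m i ≥ 1`; `𝔞⁺ = {t | ∀ i, α i t ≥ 0}` has nonempty interior;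
`ξ t = ∏ i, sinh (α i t) ^ (m i)`; `δ = max {∑ i, m i * α i t : ‖t‖ ≤ 1}` is attained at the
unique point `v` (the barycenter), lying in the interior of `𝔞⁺`.  Let `Q ⊆ 𝔞⁺` be a closed
convex cone with vertex at the origin containing `v` in its interior, and let `C > 0`.  With
`Q_T(C) = {t ∈ Q : ‖t‖ < T ∧ ∀ i, α i t ≥ C}`, we have
`∫_{Q_T(C)} ξ ∼ ∫_{(𝔞⁺)_T} ξ` as `T → ∞`. -/
theorem cone_truncation_asymptotics
    (r : ℕ) (hr : 1 ≤ r)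
    (ι : Type) [Fintype ι] [Nonempty ι]
    (α : ι → (EuclideanSpace ℝ (Fin r) →ₗ[ℝ] ℝ))
    (hα : ∀ i, α i ≠ 0)
    (m : ι → ℕ) (hm : ∀ i, 1 ≤ m i)
    (aPos : Set (EuclideanSpace ℝ (Fin r)))
    (haPos : aPos = {t | ∀ i, 0 ≤ α i t})
    (haPosInt : (interior aPos).Nonempty)
    (ξ : EuclideanSpace ℝ (Fin r) → ℝ)
    (hξ : ∀ t, ξ t = ∏ i, Real.sinh (α i t) ^ m i)
    (δ : ℝ) (v : EuclideanSpace ℝ (Fin r))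
    (hv_norm : ‖v‖ ≤ 1)
    (hδ : δ = ∑ i, (m i : ℝ) * α i v)
    (hmax : ∀ t : EuclideanSpace ℝ (Fin r), ‖t‖ ≤ 1 → ∑ i, (m i : ℝ) * α i t ≤ δ)
    (huniq : ∀ t : EuclideanSpace ℝ (Fin r), ‖t‖ ≤ 1 →
      (∑ i, (m i : ℝ) * α i t) = δ → t = v)
    (hv_int : v ∈ interior aPos)
    (Q : Set (EuclideanSpace ℝ (Fin r)))
    (hQclosed : IsClosed Q) (hQconvex : Convex ℝ Q)
    (hQcone : ∀ c : ℝ, 0 ≤ c → ∀ x ∈ Q, c • x ∈ Q)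
    (hQsub : Q ⊆ aPos) (hvQ : v ∈ interior Q)
    (C : ℝ) (hC : 0 < C) :
    Tendsto (fun T : ℝ =>
        (∫ t in {t ∈ Q | ‖t‖ < T ∧ ∀ i, C ≤ α i t}, ξ t) /
          (∫ t in {t ∈ aPos | ‖t‖ < T}, ξ t))
      atTop (nhds 1) := by
  classical
  -- basic continuity and measurability
  have hαcont : ∀ i, Continuous (α i) := fun i => (α i).continuous_of_finiteDimensional
  set L : EuclideanSpace ℝ (Fin r) → ℝ := fun t => ∑ i, (m i : ℝ) * α i t with hLdef
  have hLcont : Continuous L := by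
    apply continuous_finset_sum
    exact fun i _ => (continuous_const.mul (hαcont i))
  have hLsmul : ∀ (c : ℝ) t, L (c • t) = c * L t := by
    intro c t
    simp only [hLdef, Finset.mul_sum]
    refine Finset.sum_congr rfl fun i _ => ?_
    rw [LinearMap.map_smul, smul_eq_mul]; ring
  have haPosClosed : IsClosed aPos := by
    rw [haPos]
    have : {t : EuclideanSpace ℝ (Fin r) | ∀ i, 0 ≤ α i t} = ⋂ i, (α i) ⁻¹' (Ici 0) := by
      ext t; simp [Set.mem_iInter]
    rw [this]
    exact isClosed_iInter fun i => (isClosed_Ici).preimage (hαcont i)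
  have hξcont : Continuous ξ := by
    have : Continuous fun t => ∏ i, Real.sinh (α i t) ^ m i :=
      continuous_finset_prod _ fun i _ => (Real.continuous_sinh.comp (hαcont i)).pow _
    exact (funext hξ) ▸ this
  have hξnonneg : ∀ t ∈ aPos, 0 ≤ ξ t := by
    intro t ht
    rw [hξ]
    exact Finset.prod_nonneg fun i _ =>
      pow_nonneg (by rw [haPos] at ht; exact Real.sinh_nonneg_iff.mpr (ht i)) _
  -- α i v > 0
  have hαv : ∀ i, 0 < α i v := by
    intro i
    by_contra h
    push_neg at h
    have hv0 : α i v = 0 := le_antisymm h (by rw [haPos] at hv_int; exact interior_subset hv_int i)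
    obtain ⟨w, hw⟩ : ∃ w, α i w ≠ 0 := by
      by_contra hw; push_neg at hw; exact hα i (LinearMap.ext fun t => hw t)
    -- direction u with α i u < 0
    have hu : ∃ u, α i u < 0 := by
      rcases lt_or_gt_of_ne hw with h' | h'
      · exact ⟨w, h'⟩
      · exact ⟨-w, by simpa using neg_neg_iff_pos.mpr h'⟩
    obtain ⟨u, hu⟩ := hu
    have hnhds : aPos ∈ nhds v := mem_interior_iff_mem_nhds.mp hv_int
    have hcont : Tendsto (fun s : ℝ => v + s • u) (nhds 0) (nhds v) := by
      have : Tendsto (fun s : ℝ => v + s • u) (nhds 0) (nhds (v + (0:ℝ) • u)) :=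
        (tendsto_const_nhds.add ((continuous_id.smul continuous_const).tendsto 0))
      simpa using this
    have hev : ∀ᶠ s : ℝ in nhds 0, v + s • u ∈ aPos := hcont.eventually hnhds
    obtain ⟨ε, hε, hball⟩ := Metric.eventually_nhds_iff.mp hev
    have hmem : v + (ε/2) • u ∈ aPos := hball (by
      rw [Real.dist_eq, sub_zero, abs_of_pos (half_pos hε)]; linarith)
    rw [haPos] at hmem
    have h2 := hmem i
    have h3 : (α i) (v + (ε/2) • u) = α i v + (ε/2) * α i u := by
      rw [map_add, LinearMap.map_smul, smul_eq_mul]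
    rw [h3, hv0, zero_add] at h2
    nlinarith
  have hδv : L v = δ := hδ.symm
  have hδpos : 0 < δ := by
    rw [hδ]
    apply Finset.sum_pos
    · intro i _
      have h1 : (0:ℝ) < m i := by exact_mod_cast hm i
      exact mul_pos h1 (hαv i)
    · exact Finset.univ_nonempty
  -- measurable sets
  have haPosMeas : MeasurableSet aPos := haPosClosed.measurableSet
  set B : ℝ → Set (EuclideanSpace ℝ (Fin r)) := fun T => {t ∈ aPos | ‖t‖ < T} with hBdef
  set N : ℝ → Set (EuclideanSpace ℝ (Fin r)) :=
    fun T => {t ∈ Q | ‖t‖ < T ∧ ∀ i, C ≤ α i t} with hNdef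
  have hBmeas : ∀ T, MeasurableSet (B T) := by
    intro T
    exact haPosMeas.inter (measurableSet_lt (continuous_norm.measurable) measurable_const)
  have hNmeas : ∀ T, MeasurableSet (N T) := by
    intro T
    apply (hQclosed.measurableSet).inter
    apply (measurableSet_lt (continuous_norm.measurable) measurable_const).inter
    have h1 : MeasurableSet (⋂ i, (α i) ⁻¹' (Ici C)) :=
      MeasurableSet.iInter fun i => (measurableSet_Ici).preimage (hαcont i).measurable
    convert h1 using 1
    refine Iff.of_eq (congrArg _ ?_)
    show {t : EuclideanSpace ℝ (Fin r) | ∀ i, C ≤ α i t} = _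
    ext t; simp [Set.mem_iInter]
  have hNsubB : ∀ T, N T ⊆ B T := by
    intro T t ht
    exact ⟨hQsub ht.1, ht.2.1⟩
  have hBball : ∀ T, B T ⊆ Metric.ball 0 T := by
    intro T t ht
    simpa [Metric.mem_ball, dist_eq_norm] using ht.2
  -- integrability on bounded sets
  have hInt : ∀ (s : Set (EuclideanSpace ℝ (Fin r))) (T : ℝ), MeasurableSet s →
      s ⊆ Metric.ball 0 T → IntegrableOn ξ s := by
    intro s T hs hsub
    have h1 : IntegrableOn ξ (Metric.closedBall 0 T) :=
      (hξcont.continuousOn).integrableOn_compact (isCompact_closedBall 0 T)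
    exact h1.mono_set (hsub.trans Metric.ball_subset_closedBall)
  -- the compact-maximum constants
  set K : Set (EuclideanSpace ℝ (Fin r)) := Metric.closedBall 0 1 ∩ aPos with hKdef
  have hKcompact : IsCompact K := (isCompact_closedBall 0 1).inter_right haPosClosed
  have h0aPos : (0 : EuclideanSpace ℝ (Fin r)) ∈ aPos := by
    rw [haPos]; intro i; simp
  have h0K : (0 : EuclideanSpace ℝ (Fin r)) ∈ K := ⟨by simp, h0aPos⟩
  have hKnorm : ∀ t ∈ K, ‖t‖ ≤ 1 := by
    intro t ht
    simpa [Metric.mem_closedBall, dist_eq_norm] using ht.1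
  -- 0 is not in the interior of aPos
  have h0notint : (0 : EuclideanSpace ℝ (Fin r)) ∉ interior aPos := by
    intro h0
    obtain ⟨i⟩ := ‹Nonempty ι›
    obtain ⟨w, hw⟩ : ∃ w, (α i) w < 0 := by
      by_contra hw
      push_neg at hw
      apply hα i
      apply LinearMap.ext
      intro t
      have h1 := hw t
      have h2 := hw (-t)
      simp only [map_neg] at h2
      simp only [LinearMap.zero_apply]
      linarith
    have hnhds : aPos ∈ nhds (0 : EuclideanSpace ℝ (Fin r)) := mem_interior_iff_mem_nhds.mp h0
    have hcont : Tendsto (fun s : ℝ => s • w) (nhds 0) (nhds (0 : EuclideanSpace ℝ (Fin r))) := by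
      have : Tendsto (fun s : ℝ => s • w) (nhds 0) (nhds ((0:ℝ) • w)) :=
        ((continuous_id.smul continuous_const).tendsto 0)
      simpa using this
    have hev : ∀ᶠ s : ℝ in nhds 0, s • w ∈ aPos := hcont.eventually hnhds
    obtain ⟨ε, hε, hball⟩ := Metric.eventually_nhds_iff.mp hev
    have hmem : (ε/2) • w ∈ aPos := hball (by
      rw [Real.dist_eq, sub_zero, abs_of_pos (half_pos hε)]; linarith)
    rw [haPos] at hmem
    have h2 := hmem i
    rw [LinearMap.map_smul, smul_eq_mul] at h2
    nlinarith
  -- constant for the complement of Q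
  have hKQ : ∃ dQ : ℝ, 0 ≤ dQ ∧ dQ < δ ∧ ∀ t ∈ K \ interior Q, L t ≤ dQ := by
    have hK'compact : IsCompact (K \ interior Q) := hKcompact.diff isOpen_interior
    have hK'ne : (K \ interior Q).Nonempty := by
      refine ⟨0, h0K, fun h0 => ?_⟩
      exact h0notint (interior_mono hQsub h0)
    obtain ⟨u, hu, humax⟩ := hK'compact.exists_isMaxOn hK'ne hLcont.continuousOn
    refine ⟨L u, ?_, ?_, fun t ht => humax ht⟩
    · have := humax (⟨h0K, fun h0 => h0notint (interior_mono hQsub h0)⟩ :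
        (0 : EuclideanSpace ℝ (Fin r)) ∈ K \ interior Q)
      simp only [hLdef] at this ⊢
      calc (0:ℝ) = ∑ i, (m i : ℝ) * α i (0 : EuclideanSpace ℝ (Fin r)) := by simp
        _ ≤ _ := this
    · rcases lt_or_eq_of_le (hmax u (hKnorm u hu.1)) with h' | h'
      · exact h'
      · exfalso
        have : u = v := huniq u (hKnorm u hu.1) h'
        exact hu.2 (this ▸ hvQ)
  obtain ⟨dQ, hdQ0, hdQδ, hdQmax⟩ := hKQ
  -- constants for each small-root region
  have hKi : ∀ i : ι, ∃ d : ℝ, d < δ ∧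
      ∀ t ∈ K, ∑ j ∈ Finset.univ.erase i, (m j : ℝ) * α j t ≤ d := by
    intro i
    set Li : EuclideanSpace ℝ (Fin r) → ℝ :=
      fun t => ∑ j ∈ Finset.univ.erase i, (m j : ℝ) * α j t with hLidef
    have hLicont : Continuous Li :=
      continuous_finset_sum _ fun j _ => (continuous_const.mul (hαcont j))
    obtain ⟨u, hu, humax⟩ := hKcompact.exists_isMaxOn ⟨0, h0K⟩ hLicont.continuousOn
    refine ⟨Li u, ?_, fun t ht => humax ht⟩
    have hsplit : L u = Li u + (m i : ℝ) * α i u := by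
      simp only [hLdef, hLidef]
      rw [← Finset.add_sum_erase _ _ (Finset.mem_univ i)]
      ring_nf
    have hαu : 0 ≤ α i u := by
      have := hu.2; rw [haPos] at this; exact this i
    have h1 : Li u ≤ L u := by
      rw [hsplit]
      have : (0:ℝ) ≤ (m i : ℝ) * α i u := mul_nonneg (by positivity) hαu
      linarith
    rcases lt_or_eq_of_le (h1.trans (hmax u (hKnorm u hu))) with h' | h'
    · exact h'
    · exfalso
      have hLu : L u = δ := le_antisymm (hmax u (hKnorm u hu)) (by rw [← h']; exact h1)
      have huv : u = v := huniq u (hKnorm u hu) hLu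
      have : (m i : ℝ) * α i u = 0 := by
        rw [hsplit] at hLu
        linarith [h', hLu]
      have hmi : (0:ℝ) < m i := by exact_mod_cast hm i
      have : α i u = 0 := by
        rcases mul_eq_zero.mp this with h'' | h''
        · exact absurd h'' (ne_of_gt hmi)
        · exact h''
      rw [huv] at this
      exact (ne_of_gt (hαv i)) this
  choose d hdlt hdle using hKi
  -- the global bad exponent
  set δb : ℝ := max dQ (Finset.univ.sup' Finset.univ_nonempty d) with hδbdef
  have hδblt : δb < δ := by
    apply max_lt hdQδ
    exact (Finset.sup'_lt_iff Finset.univ_nonempty).mpr fun i _ => hdlt i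
  have hδb0 : 0 ≤ δb := le_max_left _ _ |>.trans' hdQ0
  -- pointwise upper bound on the bad set
  set A : ℝ := max (Finset.univ.sup' Finset.univ_nonempty fun i => Real.sinh C ^ m i) 1
    with hAdef
  have hA1 : 1 ≤ A := le_max_right _ _
  have hbad : ∀ T : ℝ, 1 ≤ T → ∀ t ∈ B T \ N T, ξ t ≤ A * Real.exp (δb * T) := by
    intro T hT t ht
    have hTpos : 0 < T := lt_of_lt_of_le one_pos hT
    have htaPos : t ∈ aPos := ht.1.1
    have hαt : ∀ j, 0 ≤ α j t := by rw [haPos] at htaPos; exact htaPos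
    set u := T⁻¹ • t with hudef
    have htu : t = T • u := by
      rw [hudef, smul_smul, mul_inv_cancel₀ (ne_of_gt hTpos), one_smul]
    have hαu : ∀ j, α j t = T * α j u := by
      intro j
      rw [htu, LinearMap.map_smul, smul_eq_mul]
    have hu_norm : ‖u‖ ≤ 1 := by
      rw [hudef, norm_smul, norm_inv, Real.norm_eq_abs, abs_of_pos hTpos]
      rw [inv_mul_le_iff₀ hTpos, mul_one]
      exact ht.1.2.le
    have hu_aPos : u ∈ aPos := by
      rw [haPos]
      intro j
      have := hαt j
      rw [hαu j] at this
      exact nonneg_of_mul_nonneg_right this hTpos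
    have hu_K : u ∈ K := ⟨by
      rw [Metric.mem_closedBall, dist_zero_right]; exact hu_norm, hu_aPos⟩
    have hexp_mono : Real.exp (δb * T) = Real.exp (T * δb) := by rw [mul_comm]
    by_cases htQ : t ∈ Q
    · -- some root is smaller than C
      have hnotN : ¬ (t ∈ Q ∧ ‖t‖ < T ∧ ∀ i, C ≤ α i t) := ht.2
      push_neg at hnotN
      obtain ⟨i, hiC⟩ := hnotN htQ ht.1.2
      have hsplit : ξ t = Real.sinh (α i t) ^ m i *
          ∏ j ∈ Finset.univ.erase i, Real.sinh (α j t) ^ m j := by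
        rw [hξ, ← Finset.mul_prod_erase _ _ (Finset.mem_univ i)]
      have hb1 : Real.sinh (α i t) ^ m i ≤ Real.sinh C ^ m i :=
        pow_le_pow_left₀ (Real.sinh_nonneg_iff.mpr (hαt i))
          (Real.sinh_le_sinh.mpr hiC.le) _
      have hb2 : ∏ j ∈ Finset.univ.erase i, Real.sinh (α j t) ^ m j ≤
          Real.exp (T * d i) := by
        calc ∏ j ∈ Finset.univ.erase i, Real.sinh (α j t) ^ m j
            ≤ ∏ j ∈ Finset.univ.erase i, Real.exp ((m j : ℝ) * α j t) := by
              apply Finset.prod_le_prod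
              · exact fun j _ => pow_nonneg (Real.sinh_nonneg_iff.mpr (hαt j)) _
              · intro j _
                rw [Real.exp_nat_mul]
                exact pow_le_pow_left₀ (Real.sinh_nonneg_iff.mpr (hαt j))
                  (sinh_le_exp' _) _
          _ = Real.exp (∑ j ∈ Finset.univ.erase i, (m j : ℝ) * α j t) :=
              (Real.exp_sum _ _).symm
          _ ≤ Real.exp (T * d i) := by
              apply Real.exp_le_exp.mpr
              have h1 : ∑ j ∈ Finset.univ.erase i, (m j : ℝ) * α j t =
                  T * ∑ j ∈ Finset.univ.erase i, (m j : ℝ) * α j u := by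
                rw [Finset.mul_sum]
                exact Finset.sum_congr rfl fun j _ => by rw [hαu j]; ring
              rw [h1]
              exact mul_le_mul_of_nonneg_left (hdle i u hu_K) hTpos.le
      have hb3 : Real.sinh C ^ m i ≤ A :=
        le_trans (Finset.le_sup' (fun i => Real.sinh C ^ m i) (Finset.mem_univ i))
          (le_max_left _ _)
      have hb4 : Real.exp (T * d i) ≤ Real.exp (δb * T) := by
        rw [hexp_mono]
        apply Real.exp_le_exp.mpr
        apply mul_le_mul_of_nonneg_left _ hTpos.le
        exact le_trans (Finset.le_sup' d (Finset.mem_univ i)) (le_max_right _ _)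
      calc ξ t = _ := hsplit
        _ ≤ Real.sinh C ^ m i * Real.exp (T * d i) :=
            mul_le_mul hb1 hb2 (Finset.prod_nonneg fun j _ =>
              pow_nonneg (Real.sinh_nonneg_iff.mpr (hαt j)) _)
              (pow_nonneg (Real.sinh_nonneg_iff.mpr hC.le) _)
        _ ≤ A * Real.exp (δb * T) :=
            mul_le_mul hb3 hb4 (Real.exp_pos _).le (le_trans zero_le_one hA1)
    · -- t is outside the cone Q
      have hu_notQ : u ∉ interior Q := by
        intro huQ
        exact htQ (htu ▸ hQcone T hTpos.le u (interior_subset huQ))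
      have hLu : L u ≤ dQ := hdQmax u ⟨hu_K, hu_notQ⟩
      have hξle : ξ t ≤ Real.exp (L t) := by
        rw [hξ, hLdef]
        calc ∏ j, Real.sinh (α j t) ^ m j
            ≤ ∏ j, Real.exp ((m j : ℝ) * α j t) := by
              apply Finset.prod_le_prod
              · exact fun j _ => pow_nonneg (Real.sinh_nonneg_iff.mpr (hαt j)) _
              · intro j _
                rw [Real.exp_nat_mul]
                exact pow_le_pow_left₀ (Real.sinh_nonneg_iff.mpr (hαt j))
                  (sinh_le_exp' _) _
          _ = Real.exp (∑ j, (m j : ℝ) * α j t) := (Real.exp_sum _ _).symm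
      have hLt : L t ≤ δb * T := by
        have h1 : L t = T * L u := by rw [htu, hLsmul]
        rw [h1, mul_comm]
        apply mul_le_mul_of_nonneg_right _ hTpos.le
        exact le_trans hLu (le_max_left _ _)
      calc ξ t ≤ Real.exp (L t) := hξle
        _ ≤ Real.exp (δb * T) := Real.exp_le_exp.mpr hLt
        _ ≤ A * Real.exp (δb * T) := by nlinarith [Real.exp_pos (δb * T)]
  -- the lower bound on the full integral
  set δ₂ : ℝ := (δ + δb)/2 with hδ₂def
  have hδbδ₂ : δb < δ₂ := by rw [hδ₂def]; linarith
  have hδ₂δ : δ₂ < δ := by rw [hδ₂def]; linarith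
  have hδ₂0 : 0 ≤ δ₂ := by rw [hδ₂def]; linarith
  set c : ℝ := (Finset.univ.inf' Finset.univ_nonempty fun i => α i v)/2 with hcdef
  have hcpos : 0 < c := by
    rw [hcdef]
    have : (0:ℝ) < Finset.univ.inf' Finset.univ_nonempty fun i => α i v :=
      (Finset.lt_inf'_iff _).mpr fun i _ => hαv i
    linarith
  have hcv : ∀ i, c < α i v := by
    intro i
    have h1 : (Finset.univ.inf' Finset.univ_nonempty fun i => α i v) ≤ α i v :=
      Finset.inf'_le _ (Finset.mem_univ i)
    rw [hcdef]; linarith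
  set V : Set (EuclideanSpace ℝ (Fin r)) := {t | (∀ i, c < α i t) ∧ δ₂ < L t} with hVdef
  have hVopen : IsOpen V := by
    rw [hVdef]
    have h1 : IsOpen {t : EuclideanSpace ℝ (Fin r) | ∀ i, c < α i t} := by
      have : {t : EuclideanSpace ℝ (Fin r) | ∀ i, c < α i t} = ⋂ i, (α i) ⁻¹' (Ioi c) := by
        ext t; simp only [Set.mem_iInter, Set.mem_preimage, Set.mem_Ioi]; rfl
      rw [this]
      exact isOpen_iInter_of_finite fun i => (isOpen_Ioi).preimage (hαcont i)
    have h2 : IsOpen {t : EuclideanSpace ℝ (Fin r) | δ₂ < L t} :=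
      (isOpen_Ioi).preimage hLcont
    exact h1.inter h2
  have hvV : v ∈ V := ⟨fun i => hcv i, by rw [hδv]; exact hδ₂δ⟩
  obtain ⟨ρ₁, hρ₁pos, hρ₁sub⟩ := Metric.isOpen_iff.mp hVopen v hvV
  set ρ₀ : ℝ := min ρ₁ 1 with hρ₀def
  have hρ₀pos : 0 < ρ₀ := lt_min hρ₁pos one_pos
  have hρ₀le1 : ρ₀ ≤ 1 := min_le_right _ _
  have hρ₀sub : Metric.ball v ρ₀ ⊆ V := fun t ht =>
    hρ₁sub (Metric.ball_subset_ball (min_le_left _ _) ht)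
  set β : ℝ := (1 - Real.exp (-(2*c)))/2 with hβdef
  have hβpos : 0 < β := by
    rw [hβdef]
    have : Real.exp (-(2*c)) < 1 := Real.exp_lt_one_iff.mpr (by linarith)
    linarith
  set M : ℕ := ∑ i, m i with hMdef
  set c₀ : ℝ := (β ^ M * Real.exp (-δ₂)) *
    (volume (Metric.ball (0 : EuclideanSpace ℝ (Fin r)) ρ₀)).toReal with hc₀def
  have hvol0 : 0 < (volume (Metric.ball (0 : EuclideanSpace ℝ (Fin r)) ρ₀)).toReal := by
    apply ENNReal.toReal_pos
    · exact (Metric.measure_ball_pos volume 0 hρ₀pos).ne'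
    · exact (measure_ball_lt_top (μ := volume) (x := (0 : EuclideanSpace ℝ (Fin r))) (r := ρ₀)).ne
  have hc₀pos : 0 < c₀ := by
    rw [hc₀def]
    have := Real.exp_pos (-δ₂)
    positivity
  have hlow : ∀ T : ℝ, 2 ≤ T → c₀ * Real.exp (δ₂ * T) ≤ ∫ t in B T, ξ t := by
    intro T hT
    set s : ℝ := T - 1 with hsdef
    have hs1 : 1 ≤ s := by rw [hsdef]; linarith
    set P : Set (EuclideanSpace ℝ (Fin r)) := Metric.ball (s • v) ρ₀ with hPdef
    -- pointwise facts on P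
    have hPfacts : ∀ t ∈ P, (∀ i, c ≤ α i t) ∧ δ₂ * T - δ₂ ≤ L t ∧ ‖t‖ < T := by
      intro t ht
      have hdist : ‖t - s • v‖ < ρ₀ := by
        rw [hPdef, Metric.mem_ball, dist_eq_norm] at ht; exact ht
      have hmemV : v + (t - s • v) ∈ V := by
        apply hρ₀sub
        rw [Metric.mem_ball, dist_eq_norm]
        simpa using hdist
      have hteq : t = (s - 1) • v + (v + (t - s • v)) := by
        rw [sub_smul, one_smul]; abel
      obtain ⟨hV1, hV2⟩ := hmemV
      refine ⟨fun i => ?_, ?_, ?_⟩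
      · have h1 : α i t = (s - 1) * α i v + α i (v + (t - s • v)) := by
          conv_lhs => rw [hteq]
          rw [map_add, LinearMap.map_smul, smul_eq_mul]
        rw [h1]
        have h2 := hcv i
        have h3 := hV1 i
        nlinarith
      · have h1 : L t = (s - 1) * L v + L (v + (t - s • v)) := by
          conv_lhs => rw [hteq]
          have h0 := hLsmul (s - 1) v
          simp only [hLdef] at h0 ⊢
          rw [← h0, ← Finset.sum_add_distrib]
          refine Finset.sum_congr rfl fun i _ => ?_
          rw [map_add]
          ring
        rw [h1, hδv]
        have : (s - 1) * δ₂ ≤ (s - 1) * δ := by nlinarith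
        nlinarith
      · calc ‖t‖ = ‖s • v + (t - s • v)‖ := by congr 1; abel
          _ ≤ ‖s • v‖ + ‖t - s • v‖ := norm_add_le _ _
          _ < s * ‖v‖ + ρ₀ := by
              rw [norm_smul, Real.norm_eq_abs, abs_of_pos (by linarith : (0:ℝ) < s)]
              linarith
          _ ≤ s * 1 + 1 := by
              have : s * ‖v‖ ≤ s * 1 := by nlinarith
              linarith
          _ = T := by rw [hsdef]; ring
    have hPsubB : P ⊆ B T := by
      intro t ht
      obtain ⟨h1, _, h3⟩ := hPfacts t ht
      exact ⟨by rw [haPos]; intro i; linarith [h1 i, hcpos], h3⟩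
    have hPxi : ∀ t ∈ P, β ^ M * Real.exp (δ₂ * T - δ₂) ≤ ξ t := by
      intro t ht
      obtain ⟨h1, h2, _⟩ := hPfacts t ht
      have hkey : β ^ M * Real.exp (L t) ≤ ξ t := by
        rw [hξ]
        have heq : ∏ i, (β * Real.exp (α i t)) ^ m i = β ^ M * Real.exp (L t) := by
          simp only [mul_pow, Finset.prod_mul_distrib]
          congr 1
          · rw [Finset.prod_pow_eq_pow_sum, hMdef]
          · rw [hLdef, Real.exp_sum]
            exact Finset.prod_congr rfl fun i _ => (Real.exp_nat_mul _ _).symm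
        rw [← heq]
        apply Finset.prod_le_prod
        · intro i _
          exact pow_nonneg (mul_nonneg hβpos.le (Real.exp_pos _).le) _
        · intro i _
          apply pow_le_pow_left₀ (mul_nonneg hβpos.le (Real.exp_pos _).le)
          exact (hβdef ▸ le_sinh_of_le' c (α i t) (h1 i))
      calc β ^ M * Real.exp (δ₂ * T - δ₂) ≤ β ^ M * Real.exp (L t) := by
            apply mul_le_mul_of_nonneg_left (Real.exp_le_exp.mpr h2) (by positivity)
        _ ≤ ξ t := hkey
    have hPvol : volume P = volume (Metric.ball (0 : EuclideanSpace ℝ (Fin r)) ρ₀) := by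
      rw [hPdef]
      exact Measure.addHaar_ball_center volume _ _
    calc c₀ * Real.exp (δ₂ * T)
        = (β ^ M * Real.exp (δ₂ * T - δ₂)) * (volume P).toReal := by
          rw [hc₀def, hPvol, show δ₂ * T - δ₂ = -δ₂ + δ₂ * T by ring, Real.exp_add]
          ring
      _ ≤ ∫ t in P, ξ t := by
          apply setIntegral_ge_of_const_le_real measurableSet_ball
            (measure_ball_lt_top (μ := volume) (x := s • v) (r := ρ₀)).ne hPxi
          exact hInt P T measurableSet_ball
            (hPsubB.trans (hBball T))
      _ ≤ ∫ t in B T, ξ t := by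
          apply setIntegral_mono_set (hInt (B T) T (hBmeas T) (hBball T))
          · refine (ae_restrict_iff' (hBmeas T)).mpr (Eventually.of_forall fun t ht => ?_)
            exact hξnonneg t ht.1
          · exact HasSubset.Subset.eventuallyLE hPsubB
  -- upper bound for the integral over the bad set
  set vol1 : ℝ := (volume (Metric.ball (0 : EuclideanSpace ℝ (Fin r)) 1)).toReal with hvol1def
  have hvol1nonneg : 0 ≤ vol1 := ENNReal.toReal_nonneg
  haveI : Nontrivial (EuclideanSpace ℝ (Fin r)) :=
    Module.nontrivial_of_finrank_pos (R := ℝ)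
      (by rw [finrank_euclideanSpace_fin]; omega)
  have hBvol : ∀ T : ℝ, 0 ≤ T →
      (volume (Metric.ball (0 : EuclideanSpace ℝ (Fin r)) T)).toReal = T ^ r * vol1 := by
    intro T hT
    rw [Measure.addHaar_ball volume 0 hT, ENNReal.toReal_mul,
      ENNReal.toReal_ofReal (by positivity), hvol1def]
    congr 2
    simp
  have hsplitInt : ∀ T : ℝ, (∫ t in B T \ N T, ξ t) =
      (∫ t in B T, ξ t) - (∫ t in N T, ξ t) :=
    fun T => integral_diff (hNmeas T) (hInt (B T) T (hBmeas T) (hBball T)) (hNsubB T)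
  have hDnonneg : ∀ T : ℝ, 0 ≤ ∫ t in B T \ N T, ξ t := by
    intro T
    apply setIntegral_nonneg ((hBmeas T).diff (hNmeas T))
    exact fun t ht => hξnonneg t ht.1.1
  have hDle : ∀ T : ℝ, 1 ≤ T →
      (∫ t in B T \ N T, ξ t) ≤ A * Real.exp (δb * T) * (T ^ r * vol1) := by
    intro T hT
    have hsub : B T \ N T ⊆ Metric.ball 0 T := (Set.diff_subset).trans (hBball T)
    have hfin : volume (B T \ N T) < ⊤ :=
      (measure_mono hsub).trans_lt (measure_ball_lt_top (μ := volume))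
    have h1 : ‖∫ t in B T \ N T, ξ t‖ ≤
        (A * Real.exp (δb * T)) * (volume (B T \ N T)).toReal := by
      apply norm_setIntegral_le_of_norm_le_const hfin
      intro t ht
      rw [Real.norm_eq_abs, abs_of_nonneg (hξnonneg t ht.1.1)]
      exact hbad T hT t ht
    have h2 : (volume (B T \ N T)).toReal ≤ T ^ r * vol1 := by
      rw [← hBvol T (by linarith)]
      exact ENNReal.toReal_mono (measure_ball_lt_top (μ := volume)).ne (measure_mono hsub)
    calc (∫ t in B T \ N T, ξ t) ≤ ‖∫ t in B T \ N T, ξ t‖ := le_abs_self _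
      _ ≤ (A * Real.exp (δb * T)) * (volume (B T \ N T)).toReal := h1
      _ ≤ A * Real.exp (δb * T) * (T ^ r * vol1) := by
          apply mul_le_mul_of_nonneg_left h2
          have := Real.exp_pos (δb * T)
          nlinarith
  -- positivity of the denominator
  have hIpos : ∀ T : ℝ, 2 ≤ T → 0 < ∫ t in B T, ξ t := by
    intro T hT
    have := hlow T hT
    have h2 := Real.exp_pos (δ₂ * T)
    nlinarith
  -- the comparison function
  set b : ℝ := δ₂ - δb with hbdef
  have hb : 0 < b := by rw [hbdef]; linarith
  set K' : ℝ := A * vol1 / c₀ with hK'def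
  have hK'0 : 0 ≤ K' := by
    rw [hK'def]
    have : 0 < A := lt_of_lt_of_le one_pos hA1
    positivity
  set g : ℝ → ℝ := fun T => K' * (T ^ r * Real.exp (-(b * T))) with hgdef
  have hg0 : Tendsto g atTop (nhds 0) := by
    have h1 : Tendsto (fun T : ℝ => (b * T) ^ r * Real.exp (-(b * T))) atTop (nhds 0) :=
      (tendsto_pow_mul_exp_neg_atTop_nhds_zero r).comp (tendsto_id.const_mul_atTop hb)
    have h2 := h1.const_mul (K' / b ^ r)
    rw [mul_zero] at h2
    apply h2.congr
    intro T
    rw [hgdef, mul_pow]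
    field_simp
  -- the ratio of bad part over the whole is eventually bounded by g
  have hratio : ∀ T : ℝ, 2 ≤ T →
      (∫ t in B T \ N T, ξ t) / (∫ t in B T, ξ t) ≤ g T := by
    intro T hT
    have hI := hIpos T hT
    rw [div_le_iff₀ hI]
    have hgnn : 0 ≤ g T := by
      rw [hgdef]
      have h3 : (0:ℝ) ≤ T ^ r := by positivity
      have := (Real.exp_pos (-(b * T))).le
      positivity
    calc (∫ t in B T \ N T, ξ t) ≤ A * Real.exp (δb * T) * (T ^ r * vol1) :=
          hDle T (by linarith)
      _ = g T * (c₀ * Real.exp (δ₂ * T)) := by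
          simp only [hgdef, hK'def, hbdef]
          rw [show -((δ₂ - δb) * T) = δb * T - δ₂ * T by ring, Real.exp_sub]
          field_simp
      _ ≤ g T * ∫ t in B T, ξ t := mul_le_mul_of_nonneg_left (hlow T hT) hgnn
  -- conclude
  have hzero : Tendsto (fun T : ℝ => (∫ t in B T \ N T, ξ t) / (∫ t in B T, ξ t))
      atTop (nhds 0) := by
    apply tendsto_of_tendsto_of_tendsto_of_le_of_le' tendsto_const_nhds hg0
    · filter_upwards [eventually_ge_atTop (2:ℝ)] with T hT
      exact div_nonneg (hDnonneg T) (hIpos T hT).le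
    · filter_upwards [eventually_ge_atTop (2:ℝ)] with T hT
      exact hratio T hT
  have hfinal : Tendsto (fun T : ℝ =>
      1 - (∫ t in B T \ N T, ξ t) / (∫ t in B T, ξ t)) atTop (nhds 1) := by
    have h := (tendsto_const_nhds :
      Tendsto (fun _ : ℝ => (1:ℝ)) atTop (nhds 1)).sub hzero
    simpa using h
  apply hfinal.congr'
  filter_upwards [eventually_ge_atTop (2:ℝ)] with T hT
  have hI := hIpos T hT
  have h2 : (∫ t in N T, ξ t) = (∫ t in B T, ξ t) - (∫ t in B T \ N T, ξ t) := by
    rw [hsplitInt T]; ring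
  show 1 - (∫ t in B T \ N T, ξ t) / (∫ t in B T, ξ t)
      = (∫ t in N T, ξ t) / (∫ t in B T, ξ t)
  rw [h2]
  field_simp
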